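/- Let f : ℝ → ℝ be differentiable with bounded derivative, and suppose there exists L > 0 such that for all u, z ∈ L²(𝕋) one has ‖f'(u)·z‖_{H^{-2}(𝕋)} ≤ L ‖z‖_{H^{-2}(𝕋)}, where f'(u)·z denotes the pointwise product x ↦ f'(u(x)) z(x). Then f' is constant, i.e., f is affine linear. -/

import Mathlib

open MeasureTheory

/-- The squared `H^{-2}(𝕋)` norm of a real function on the torus `𝕋 = ℝ/ℤ`,
defined via Fourier coefficients: `∑_{k ∈ ℤ} (1+k²)^{-2} |v̂(k)|²`. -/
noncomputable def Hm2Sq (g : AddCircle (1 : ℝ) → ℝ) : ℝ :=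
  ∑' k : ℤ, (1 + (k : ℝ) ^ 2) ^ (-2 : ℝ) * ‖fourierCoeff (fun x => (g x : ℂ)) k‖ ^ 2

open Complex Set
open scoped Real

local notation "𝕋" => AddCircle (1 : ℝ)

lemma torus_integrable {E : Type*} [NormedAddCommGroup E] (g : 𝕋 → E) (hg : Continuous g) :
    Integrable g AddCircle.haarAddCircle := by
  have h := hg.continuousOn.integrableOn_compact (μ := AddCircle.haarAddCircle)
      (isCompact_univ (X := 𝕋))
  rwa [integrableOn_univ] at h

lemma integral_fourier_torus (j : ℤ) :
    ∫ x : 𝕋, fourier j x ∂AddCircle.haarAddCircle = if j = 0 then 1 else 0 := by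
  split_ifs with hj
  · subst hj
    simp_rw [fourier_zero]
    simp
  · exact integral_eq_zero_of_add_right_eq_neg
      (fourier_add_half_inv_index hj one_pos)

lemma norm_fourier_apply (j : ℤ) (x : 𝕋) : ‖fourier j x‖ = 1 := by
  rw [fourier_apply, Circle.norm_coe]

lemma ofReal_re_fourier (N : ℤ) (x : 𝕋) :
    (((fourier N x).re : ℝ) : ℂ) = (fourier N x + fourier (-N) x) / 2 := by
  rw [fourier_neg, Complex.add_conj]
  push_cast
  ring

lemma fourierCoeff_z (N k : ℤ) :
    fourierCoeff (fun x : 𝕋 => (((fourier N x).re : ℝ) : ℂ)) k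
      = ((if k = N then 1 else 0) + (if k = -N then 1 else 0)) / 2 := by
  unfold fourierCoeff
  have key : ∀ x : 𝕋, fourier (-k) x • (((fourier N x).re : ℝ) : ℂ)
      = (fourier (-k + N) x + fourier (-k + -N) x) / 2 := by
    intro x
    rw [smul_eq_mul, ofReal_re_fourier, fourier_add, fourier_add]
    ring
  simp_rw [key]
  rw [integral_div, integral_add (torus_integrable _ (fourier (-k+N)).continuous)
    (torus_integrable _ (fourier (-k + -N)).continuous),
    integral_fourier_torus, integral_fourier_torus]
  congr 2
  · by_cases hk : k = N <;> simp [hk] <;> omega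
  · by_cases hk : k = -N <;> simp [hk] <;> omega

lemma rpow_neg_two_eq (c : ℝ) (hc : 0 < c) : c ^ (-2 : ℝ) = (c ^ 2)⁻¹ := by
  rw [show (-2 : ℝ) = -(2 : ℕ) by norm_num, Real.rpow_neg hc.le, Real.rpow_natCast]

lemma Hm2Sq_z (N : ℤ) (hN : 0 < N) :
    Hm2Sq (fun x : 𝕋 => (fourier N x).re) = (1 + (N : ℝ) ^ 2) ^ (-2 : ℝ) / 2 := by
  unfold Hm2Sq
  have hz : ∀ k : ℤ, k ∉ ({N, -N} : Finset ℤ) →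
      (1 + (k : ℝ) ^ 2) ^ (-2 : ℝ) * ‖fourierCoeff (fun x : 𝕋 => (((fourier N x).re : ℝ) : ℂ)) k‖ ^ 2 = 0 := by
    intro k hk
    simp only [Finset.mem_insert, Finset.mem_singleton, not_or] at hk
    rw [fourierCoeff_z, if_neg hk.1, if_neg hk.2]
    norm_num
  rw [tsum_eq_sum hz, Finset.sum_pair (by omega : N ≠ -N)]
  rw [fourierCoeff_z, fourierCoeff_z]
  rw [if_pos rfl, if_neg (by omega : N ≠ -N), if_neg (by omega : -N ≠ N), if_pos rfl]
  have h1 : ‖((1 : ℂ) + 0) / 2‖ ^ 2 = (1 / 4 : ℝ) := by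
    norm_num
  have h2 : ‖((0 : ℂ) + 1) / 2‖ ^ 2 = (1 / 4 : ℝ) := by
    norm_num
  rw [h1, h2]
  push_cast
  rw [neg_sq]
  ring

lemma summable_weight : Summable (fun k : ℤ => ((1 + (k : ℝ) ^ 2) ^ 2)⁻¹) := by
  have hnat : Summable (fun n : ℕ => ((1 + (n : ℝ) ^ 2) ^ 2)⁻¹) := by
    have h1 : Summable (fun n : ℕ => 1 / ((n : ℝ) + 1) ^ 2) := by
      have h2 : Summable (fun n : ℕ => 1 / ((n : ℝ)) ^ 2) :=
        Real.summable_one_div_nat_pow.mpr one_lt_two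
      have := (summable_nat_add_iff 1).mpr h2
      refine this.congr fun n => ?_
      push_cast
      ring_nf
    refine Summable.of_nonneg_of_le (fun n => by positivity) (fun n => ?_) h1
    rw [one_div]
    have hn : (n : ℝ) ≤ (n : ℝ) ^ 2 := by
      rcases Nat.eq_zero_or_pos n with h | h
      · simp [h]
      · have : (1 : ℝ) ≤ (n : ℝ) := by exact_mod_cast h
        nlinarith
    have hle : ((n : ℝ) + 1) ^ 2 ≤ (1 + (n : ℝ) ^ 2) ^ 2 := by nlinarith
    have hp : (0 : ℝ) < ((n : ℝ) + 1) ^ 2 := by positivity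
    exact inv_anti₀ hp hle
  refine Summable.of_nat_of_neg (hnat.congr fun n => by norm_num) (hnat.congr fun n => by push_cast; norm_num)

lemma norm_fourierCoeff_le (g : 𝕋 → ℂ) (C : ℝ) (hg : ∀ x, ‖g x‖ ≤ C) (k : ℤ) :
    ‖fourierCoeff g k‖ ≤ C := by
  unfold fourierCoeff
  have key : ‖∫ t : 𝕋, fourier (-k) t • g t ∂AddCircle.haarAddCircle‖
      ≤ C * ((AddCircle.haarAddCircle : Measure 𝕋) Set.univ).toReal := by
    apply norm_integral_le_of_norm_le_const
    filter_upwards with x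
    rw [norm_smul, norm_fourier_apply, one_mul]
    exact hg x
  simpa using key

lemma summable_Hm2Sq (g : 𝕋 → ℝ) (C : ℝ) (hg : ∀ x, |g x| ≤ C) :
    Summable (fun k : ℤ =>
      (1 + (k : ℝ) ^ 2) ^ (-2 : ℝ) * ‖fourierCoeff (fun x : 𝕋 => ((g x : ℝ) : ℂ)) k‖ ^ 2) := by
  refine Summable.of_nonneg_of_le (fun k => ?_) (fun k => ?_)
    ((summable_weight.mul_right (C ^ 2)))
  · positivity
  · have hpos : (0 : ℝ) < 1 + (k : ℝ) ^ 2 := by positivity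
    rw [rpow_neg_two_eq _ hpos]
    have hb : ‖fourierCoeff (fun x : 𝕋 => ((g x : ℝ) : ℂ)) k‖ ≤ C := by
      refine norm_fourierCoeff_le _ C (fun x => ?_) k
      rw [Complex.norm_real]
      exact hg x
    have h0 : (0 : ℝ) ≤ ‖fourierCoeff (fun x : 𝕋 => ((g x : ℝ) : ℂ)) k‖ := norm_nonneg _
    gcongr

lemma le_Hm2Sq_of_coeff_zero (g : 𝕋 → ℝ) (C : ℝ) (hg : ∀ x, |g x| ≤ C) :
    ‖fourierCoeff (fun x : 𝕋 => ((g x : ℝ) : ℂ)) 0‖ ^ 2 ≤ Hm2Sq g := by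
  have h := Summable.le_tsum (summable_Hm2Sq g C hg) 0 (fun k _ => by positivity)
  unfold Hm2Sq
  simp only [Int.cast_zero, ne_eq, OfNat.ofNat_ne_zero, not_false_eq_true, zero_pow, add_zero,
    Real.one_rpow, one_mul] at h
  convert h using 2

lemma key_integral (N : ℤ) (hN : 0 < N) (p q : ℝ) :
    (∫ t in (0:ℝ)..1,
      (p * max (Real.cos (2 * π * N * t)) 0 + q * min (Real.cos (2 * π * N * t)) 0))
      = (p - q) / π := by
  have hNR : (0 : ℝ) < (N : ℝ) := by exact_mod_cast hN
  set F : ℝ → ℝ := fun s => p * max (Real.cos s) 0 + q * min (Real.cos s) 0 with hF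
  have hFcont : Continuous F := by
    apply Continuous.add
    · exact continuous_const.mul (Real.continuous_cos.max continuous_const)
    · exact continuous_const.mul (Real.continuous_cos.min continuous_const)
  have hper : Function.Periodic F (2 * π) := by
    intro s
    simp [hF, Real.cos_add_two_pi]
  have hint : ∀ t₁ t₂ : ℝ, IntervalIntegrable F MeasureTheory.volume t₁ t₂ :=
    fun t₁ t₂ => hFcont.intervalIntegrable t₁ t₂
  have hc : (2 * π * (N : ℝ)) ≠ 0 := by
    have := Real.pi_pos
    positivity
  have h1 : (∫ t in (0:ℝ)..1, F (2 * π * (N : ℝ) * t))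
      = (2 * π * (N : ℝ))⁻¹ * ∫ s in (0:ℝ)..(2 * π * (N : ℝ)), F s := by
    rw [intervalIntegral.integral_comp_mul_left F hc, mul_zero, mul_one, smul_eq_mul]
  have h2 : (∫ s in (0:ℝ)..(2 * π * (N : ℝ)), F s) = (N : ℝ) * ∫ s in (0:ℝ)..(2 * π), F s := by
    have hz := hper.intervalIntegral_add_zsmul_eq N 0 hint
    simp only [zero_add, zsmul_eq_mul] at hz
    rw [show (2 * π * (N : ℝ)) = (N : ℝ) * (2 * π) by ring, hz]
  have e1 : (∫ s in (0:ℝ)..(π / 2), F s) = p := by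
    have heq : Set.EqOn F (fun s => p * Real.cos s) (Set.uIcc 0 (π / 2)) := by
      rw [Set.uIcc_of_le (by positivity)]
      intro s hs
      have hcos : 0 ≤ Real.cos s :=
        Real.cos_nonneg_of_mem_Icc ⟨by linarith [hs.1, Real.pi_pos], hs.2⟩
      simp [hF, max_eq_left hcos, min_eq_right hcos]
    rw [intervalIntegral.integral_congr heq, intervalIntegral.integral_const_mul,
      integral_cos]
    simp
  have e2 : (∫ s in (π / 2)..(π + π / 2), F s) = -(2 * q) := by
    have heq : Set.EqOn F (fun s => q * Real.cos s) (Set.uIcc (π / 2) (π + π / 2)) := by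
      rw [Set.uIcc_of_le (by linarith [Real.pi_pos])]
      intro s hs
      have hcos : Real.cos s ≤ 0 :=
        Real.cos_nonpos_of_pi_div_two_le_of_le hs.1 hs.2
      simp [hF, max_eq_right hcos, min_eq_left hcos]
    rw [intervalIntegral.integral_congr heq, intervalIntegral.integral_const_mul,
      integral_cos]
    rw [show π + π / 2 = π / 2 + π by ring, Real.sin_add_pi]
    simp
    ring
  have e3 : (∫ s in (π + π / 2)..(2 * π), F s) = p := by
    have heq : Set.EqOn F (fun s => p * Real.cos s) (Set.uIcc (π + π / 2) (2 * π)) := by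
      rw [Set.uIcc_of_le (by linarith [Real.pi_pos])]
      intro s hs
      have hcos : 0 ≤ Real.cos s := by
        rw [← Real.cos_sub_two_pi]
        exact Real.cos_nonneg_of_mem_Icc ⟨by linarith [hs.1, Real.pi_pos], by linarith [hs.2, Real.pi_pos]⟩
      simp [hF, max_eq_left hcos, min_eq_right hcos]
    rw [intervalIntegral.integral_congr heq, intervalIntegral.integral_const_mul,
      integral_cos]
    rw [show π + π / 2 = π / 2 + π by ring, Real.sin_add_pi]
    simp
  have h3 : (∫ s in (0:ℝ)..(2 * π), F s) = 2 * p - 2 * q := by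
    rw [← intervalIntegral.integral_add_adjacent_intervals (hint 0 (π / 2)) (hint (π / 2) (2 * π)),
      ← intervalIntegral.integral_add_adjacent_intervals (hint (π / 2) (π + π / 2))
        (hint (π + π / 2) (2 * π)), e1, e2, e3]
    ring
  calc (∫ t in (0:ℝ)..1,
      (p * max (Real.cos (2 * π * N * t)) 0 + q * min (Real.cos (2 * π * N * t)) 0))
      = ∫ t in (0:ℝ)..1, F (2 * π * (N : ℝ) * t) := by rfl
    _ = (2 * π * (N : ℝ))⁻¹ * ((N : ℝ) * (2 * p - 2 * q)) := by rw [h1, h2, h3]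
    _ = (p - q) / π := by
        field_simp

lemma re_fourier_coe (N : ℤ) (t : ℝ) :
    (fourier N ((t : ℝ) : 𝕋)).re = Real.cos (2 * π * N * t) := by
  rw [fourier_coe_apply]
  have harg : 2 * π * Complex.I * (N : ℂ) * (t : ℂ) / (((1 : ℝ)) : ℂ)
      = ((2 * π * (N : ℝ) * t : ℝ) : ℂ) * Complex.I := by
    push_cast
    ring
  rw [harg, Complex.exp_ofReal_mul_I_re]

lemma fourierCoeff_G (N : ℤ) (hN : 0 < N) (p q : ℝ) :
    fourierCoeff (fun x : 𝕋 =>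
      ((p * max (fourier N x).re 0 + q * min (fourier N x).re 0 : ℝ) : ℂ)) 0
      = (((p - q) / π : ℝ) : ℂ) := by
  rw [fourierCoeff_eq_intervalIntegral _ 0 0]
  simp only [neg_zero, zero_add]
  have hsimp : ∀ x : ℝ, (fourier (0 : ℤ) ((x : ℝ) : 𝕋)) •
      ((p * max (fourier N ((x : ℝ) : 𝕋)).re 0 + q * min (fourier N ((x : ℝ) : 𝕋)).re 0 : ℝ) : ℂ)
      = ((p * max (Real.cos (2 * π * N * x)) 0 + q * min (Real.cos (2 * π * N * x)) 0 : ℝ) : ℂ) := by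
    intro x
    rw [fourier_zero, one_smul, re_fourier_coe]
  simp only [hsimp]
  rw [intervalIntegral.integral_ofReal, key_integral N hN p q]
  norm_num

lemma memLp_torus_of_bound (g : 𝕋 → ℝ) (hg : AEStronglyMeasurable g AddCircle.haarAddCircle)
    (C : ℝ) (hC : ∀ x, |g x| ≤ C) : MemLp g 2 AddCircle.haarAddCircle :=
  MemLp.of_bound hg C (Filter.Eventually.of_forall (by simpa [Real.norm_eq_abs] using hC))

lemma abs_re_fourier_le (N : ℤ) (x : 𝕋) : |(fourier N x).re| ≤ 1 := by
  have h := Complex.abs_re_le_norm (fourier N x)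
  rwa [show ‖fourier N x‖ = 1 from by
    exact norm_fourier_apply N x] at h

theorem stmt5 (f : ℝ → ℝ) (hf : Differentiable ℝ f)
    (B : ℝ) (hB : ∀ x, |deriv f x| ≤ B)
    (L : ℝ) (hL : 0 < L)
    (h : ∀ u z : AddCircle (1 : ℝ) → ℝ,
      MemLp u 2 AddCircle.haarAddCircle → MemLp z 2 AddCircle.haarAddCircle →
      Hm2Sq (fun x => deriv f (u x) * z x) ≤ L ^ 2 * Hm2Sq z) :
    ∃ a b : ℝ, ∀ x, f x = a * x + b := by
  have hconst : ∀ r s : ℝ, deriv f r = deriv f s := by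
    intro r s
    set p := deriv f r
    set q := deriv f s
    set dd := ((p - q) / π) ^ 2 with hdd_def
    have hdd_nonneg : 0 ≤ dd := sq_nonneg _
    have hdd : ∀ n : ℕ, dd ≤ L ^ 2 * ((n : ℝ) + 1)⁻¹ := by
      intro n
      set N : ℤ := (n : ℤ) + 1 with hNdef
      have hN : 0 < N := by omega
      have hNR : ((N : ℝ)) = (n : ℝ) + 1 := by push_cast [hNdef]; ring
      set z : 𝕋 → ℝ := fun x => (fourier N x).re with hz_def
      set u : 𝕋 → ℝ := fun x => if 0 ≤ (fourier N x).re then r else s with hu_def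
      set G : 𝕋 → ℝ := fun x => p * max ((fourier N x).re) 0 + q * min ((fourier N x).re) 0
        with hG_def
      have hGu : (fun x => deriv f (u x) * z x) = G := by
        funext x
        by_cases h0 : 0 ≤ (fourier N x).re
        · simp only [hu_def, hz_def, hG_def, if_pos h0, max_eq_left h0, min_eq_right h0]
          ring
        · push_neg at h0
          simp only [hu_def, hz_def, hG_def, if_neg (not_le.mpr h0),
            max_eq_right h0.le, min_eq_left h0.le]
          ring
      have hzcont : Continuous z := Complex.continuous_re.comp (fourier N).continuous
      have hz2 : MemLp z 2 AddCircle.haarAddCircle :=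
        memLp_torus_of_bound z hzcont.aestronglyMeasurable 1 (abs_re_fourier_le N)
      have hu2 : MemLp u 2 AddCircle.haarAddCircle := by
        refine memLp_torus_of_bound u ?_ (max |r| |s|) ?_
        · refine (Measurable.ite ?_ measurable_const measurable_const).aestronglyMeasurable
          exact (isClosed_Ici.preimage (Complex.continuous_re.comp
            (fourier N).continuous)).measurableSet
        · intro x
          by_cases h0 : 0 ≤ (fourier N x).re
          · simp only [hu_def, if_pos h0]
            exact le_max_left _ _
          · simp only [hu_def, if_neg h0]
            exact le_max_right _ _
      have key := h u z hu2 hz2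
      rw [hGu, Hm2Sq_z N hN] at key
      have hGb : ∀ x, |G x| ≤ |p| + |q| := by
        intro x
        have hc := abs_re_fourier_le N x
        have h1 : |max ((fourier N x).re) 0| ≤ 1 := by
          rw [abs_le]
          constructor
          · linarith [le_max_right ((fourier N x).re) 0]
          · exact max_le (abs_le.1 hc).2 zero_le_one
        have h2 : |min ((fourier N x).re) 0| ≤ 1 := by
          rw [abs_le]
          constructor
          · exact le_min (abs_le.1 hc).1 (by norm_num)
          · linarith [min_le_right ((fourier N x).re) 0]
        calc |G x| ≤ |p * max ((fourier N x).re) 0| + |q * min ((fourier N x).re) 0| :=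
              abs_add_le _ _
          _ = |p| * |max ((fourier N x).re) 0| + |q| * |min ((fourier N x).re) 0| := by
              rw [abs_mul, abs_mul]
          _ ≤ |p| * 1 + |q| * 1 := by
              gcongr
          _ = |p| + |q| := by ring
      have hlow : dd ≤ Hm2Sq G := by
        have h1 := le_Hm2Sq_of_coeff_zero G (|p| + |q|) hGb
        have h2 : fourierCoeff (fun x : 𝕋 => ((G x : ℝ) : ℂ)) 0 = (((p - q) / π : ℝ) : ℂ) := by
          simp only [hG_def]
          exact fourierCoeff_G N hN p q
        rw [h2, Complex.norm_real, Real.norm_eq_abs, _root_.sq_abs] at h1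
        exact h1
      have hup : L ^ 2 * ((1 + (N : ℝ) ^ 2) ^ (-2 : ℝ) / 2) ≤ L ^ 2 * ((n : ℝ) + 1)⁻¹ := by
        have hpos : (0 : ℝ) < 1 + (N : ℝ) ^ 2 := by positivity
        rw [rpow_neg_two_eq _ hpos]
        have hle : (n : ℝ) + 1 ≤ (1 + (N : ℝ) ^ 2) ^ 2 := by
          rw [hNR]
          nlinarith [Nat.cast_nonneg (α := ℝ) n]
        have h1 : ((1 + (N : ℝ) ^ 2) ^ 2)⁻¹ ≤ ((n : ℝ) + 1)⁻¹ := by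
          apply inv_anti₀ (by positivity) hle
        have h2 : ((1 + (N : ℝ) ^ 2) ^ 2)⁻¹ / 2 ≤ ((1 + (N : ℝ) ^ 2) ^ 2)⁻¹ := by
          have : (0:ℝ) ≤ ((1 + (N : ℝ) ^ 2) ^ 2)⁻¹ := by positivity
          linarith
        have := h2.trans h1
        nlinarith [sq_nonneg L]
      exact hlow.trans (key.trans hup)
    have hdd0 : dd = 0 := by
      by_contra hne
      have hpos : 0 < dd := lt_of_le_of_ne hdd_nonneg (Ne.symm hne)
      obtain ⟨n, hn⟩ := exists_nat_gt (L ^ 2 / dd)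
      have h1 : (0:ℝ) < (n : ℝ) + 1 := by positivity
      have h5 : dd * ((n : ℝ) + 1) ≤ L ^ 2 := by
        have h6 := mul_le_mul_of_nonneg_right (hdd n) h1.le
        calc dd * ((n : ℝ) + 1) ≤ L ^ 2 * ((n : ℝ) + 1)⁻¹ * ((n : ℝ) + 1) := h6
          _ = L ^ 2 := by field_simp
      have h7 : L ^ 2 < (n : ℝ) * dd := (div_lt_iff₀ hpos).mp hn
      nlinarith
    have : (p - q) / π = 0 := by
      have := sq_eq_zero_iff.mp hdd0
      exact this
    rcases div_eq_zero_iff.mp this with h1 | h1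
    · linarith [sub_eq_zero.mp h1]
    · exact absurd h1 Real.pi_ne_zero
  refine ⟨deriv f 0, f 0, fun x => ?_⟩
  set φ : ℝ → ℝ := fun x => f x - deriv f 0 * x with hφ_def
  have hφdiff : Differentiable ℝ φ := hf.sub (differentiable_id.const_mul _)
  have hφ' : ∀ y, deriv φ y = 0 := by
    intro y
    have h2 : HasDerivAt (fun x : ℝ => deriv f 0 * x) (deriv f 0) y := by
      simpa using (hasDerivAt_id y).const_mul (deriv f 0)
    have hd : HasDerivAt φ (deriv f y - deriv f 0) y := (hf y).hasDerivAt.sub h2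
    rw [hd.deriv, hconst y 0, sub_self]
  have := is_const_of_deriv_eq_zero hφdiff hφ' x 0
  simp only [hφ_def, mul_zero, sub_zero] at this
  linarith
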